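/- Let q be a positive f-specification, V a finite set, and I a finite set disjoint from V. Then for any x ∈ X^V, the quantity P_V(x) = q_V^y(x)/q_I^x(y)·(Σ_α q_V^y(α)/q_I^α(y))^{-1} equals (Σ_{β∈X^I} q_I^x(β)/q_V^β(x))^{-1}; i.e., formulas (Q->P) and (Q->P-2) agree. -/

import Mathlib

/-- `setOn x A σ` is the configuration equal to `σ` on the finite set `A`
and to `x` elsewhere; it realizes a configuration `σ ∈ X^A` as a full
configuration (used for summation over `X^A`). -/
def setOn {S X : Type*} [DecidableEq S] (x : S → X) (A : Finset S)
    (σ : {u // u ∈ A} → X) : S → X :=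
  fun u => if h : u ∈ A then σ ⟨u, h⟩ else x u

/-- `patch z A x` is the concatenation which equals `x` on `A` and `z` elsewhere:
it realizes the concatenated boundary condition `zx` (with `x ∈ X^A`). -/
def patch {S X : Type*} [DecidableEq S] (z : S → X) (A : Finset S) (x : S → X) : S → X :=
  fun u => if u ∈ A then x u else z u

/-- A positive `f`-specification: to each finite set `A` and finite boundary set `B`
(disjoint from `A`) with boundary configuration `z` it assigns a positive probability
distribution `q A B z ·` on `X^A` (configurations are encoded as full functions `S → X`,
with `q A B z x` depending only on `z` on `B` and on `x` on `A`), satisfying the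
consistency conditions `q_{A∪B}^z(xy) = q_A^z(x) · q_B^{zx}(y)`. -/
structure IsFSpec {S X : Type*} [DecidableEq S] [Fintype X]
    (q : Finset S → Finset S → (S → X) → (S → X) → ℝ) : Prop where
  isLocal : ∀ (A B : Finset S) (z z' x x' : S → X),
    (∀ u ∈ B, z u = z' u) → (∀ u ∈ A, x u = x' u) → q A B z x = q A B z' x'
  pos : ∀ (A B : Finset S), Disjoint A B → ∀ z x, 0 < q A B z x
  sum_one : ∀ (A B : Finset S), Disjoint A B → ∀ z x,
    ∑ σ : {u // u ∈ A} → X, q A B z (setOn x A σ) = 1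
  consistent : ∀ (A B C : Finset S), Disjoint A B → Disjoint A C → Disjoint B C →
    ∀ z x : S → X, q (A ∪ B) C z x = q A C z x * q B (C ∪ A) (patch z A x) x

/-- formulas (Q->P) and (Q->P-2) agree: for a positive `f`-specification,
`q_V^y(x)/q_I^x(y) · (Σ_α q_V^y(α)/q_I^α(y))⁻¹ = (Σ_{β∈X^I} q_I^x(β)/q_V^β(x))⁻¹`. -/
theorem candidate_marginal_formulas_agree {S X : Type*} [DecidableEq S]
    [Fintype X] [Nonempty X]
    (q : Finset S → Finset S → (S → X) → (S → X) → ℝ) (hq : IsFSpec q)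
    (V I : Finset S) (hVI : Disjoint V I) (y x : S → X) :
    q V I y x / q I V x y *
        (∑ α : {u // u ∈ V} → X, q V I y (setOn x V α) / q I V (setOn x V α) y)⁻¹
      = (∑ β : {u // u ∈ I} → X, q I V x (setOn y I β) / q V I (setOn y I β) x)⁻¹ := by
  have hIV : Disjoint I V := hVI.symm
  have hV0 : Disjoint V (∅ : Finset S) := Finset.disjoint_empty_right V
  have hI0 : Disjoint I (∅ : Finset S) := Finset.disjoint_empty_right I
  have key : ∀ w : S → X, q V I w w * q I ∅ w w = q I V w w * q V ∅ w w := by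
    intro w
    have hp : patch w V w = w := by funext u; simp [patch]
    have hp' : patch w I w = w := by funext u; simp [patch]
    have h1 := hq.consistent V I ∅ hVI hV0 hI0 w w
    have h2 := hq.consistent I V ∅ hIV hI0 hV0 w w
    rw [Finset.union_comm] at h2
    rw [h1, hp, hp', Finset.empty_union, Finset.empty_union] at h2
    linarith
  set c := q I ∅ y y with hc
  set d := q V ∅ y x with hd
  have hcpos : 0 < c := hq.pos I ∅ hI0 y y
  have hdpos : 0 < d := hq.pos V ∅ hV0 y x
  have ratioV : ∀ x' : S → X, q V I y x' / q I V x' y = q V ∅ y x' / c := by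
    intro x'
    set w := patch y V x' with hw
    have hwV : ∀ u ∈ V, w u = x' u := by intro u hu; simp [hw, patch, hu]
    have hwI : ∀ u ∈ I, w u = y u := by
      intro u hu
      have hn : u ∉ V := fun h => (Finset.disjoint_left.mp hVI h) hu
      simp [hw, patch, hn]
    have e1 : q V I y x' = q V I w w := (hq.isLocal V I w y w x' hwI hwV).symm
    have e2 : q I V x' y = q I V w w := (hq.isLocal I V w x' w y hwV hwI).symm
    have e3 : q V ∅ y x' = q V ∅ w w :=
      (hq.isLocal V ∅ w y w x' (fun u hu => absurd hu (Finset.notMem_empty u)) hwV).symm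
    have e4 : c = q I ∅ w w :=
      (hq.isLocal I ∅ w y w y (fun u hu => absurd hu (Finset.notMem_empty u)) hwI).symm
    rw [e1, e2, e3, e4]
    rw [div_eq_div_iff (hq.pos I V hIV w w).ne' (hq.pos I ∅ hI0 w w).ne']
    linear_combination key w
  have ratioI : ∀ b' : S → X, q I V x b' / q V I b' x = q I ∅ x b' / d := by
    intro b'
    set w := patch x I b' with hw
    have hwI : ∀ u ∈ I, w u = b' u := by intro u hu; simp [hw, patch, hu]
    have hwV : ∀ u ∈ V, w u = x u := by
      intro u hu
      have hn : u ∉ I := fun h => (Finset.disjoint_left.mp hIV h) hu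
      simp [hw, patch, hn]
    have e1 : q I V x b' = q I V w w := (hq.isLocal I V w x w b' hwV hwI).symm
    have e2 : q V I b' x = q V I w w := (hq.isLocal V I w b' w x hwI hwV).symm
    have e3 : q I ∅ x b' = q I ∅ w w :=
      (hq.isLocal I ∅ w x w b' (fun u hu => absurd hu (Finset.notMem_empty u)) hwI).symm
    have e4 : d = q V ∅ w w :=
      (hq.isLocal V ∅ w y w x (fun u hu => absurd hu (Finset.notMem_empty u)) hwV).symm
    rw [e1, e2, e3, e4]
    rw [div_eq_div_iff (hq.pos V I hVI w w).ne' (hq.pos V ∅ hV0 w w).ne']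
    linear_combination - key w
  have sumV : ∑ α : {u // u ∈ V} → X, q V I y (setOn x V α) / q I V (setOn x V α) y = c⁻¹ := by
    simp_rw [ratioV, div_eq_mul_inv, ← Finset.sum_mul]
    rw [hq.sum_one V ∅ hV0 y x, one_mul]
  have sumI : ∑ β : {u // u ∈ I} → X, q I V x (setOn y I β) / q V I (setOn y I β) x = d⁻¹ := by
    simp_rw [ratioI, div_eq_mul_inv, ← Finset.sum_mul]
    rw [hq.sum_one I ∅ hI0 x y, one_mul]
  rw [ratioV x, sumV, sumI, inv_inv, inv_inv]
  field_simp
  exact hd.symm
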